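/- Let h : ℝ → ℝ be strictly convex and differentiable at a point c ∈ ℝ, set T = h'(c). Let W : ℝ → ℝ be a 1-periodic, even, Lipschitz function with Lipschitz constant 1, and let ε, τ > 0. Let u, v ∈ ℝ with u ≤ v and u, v > c; let u' be a global minimizer over ℝ of t ↦ h(t) + ε·W(t/ε) + (1/(2τ))(t − u)² and v' a global minimizer over ℝ of t ↦ T·t + ε·W(t/ε) + (1/(2τ))(t − v)². If moreover u' > c and v' > c, then u' ≤ v'. -/
import Mathlib


theorem stmt_5 (h : ℝ → ℝ) (hconv : StrictConvexOn ℝ Set.univ h)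
    (c T : ℝ) (hT : HasDerivAt h T c)
    (W : ℝ → ℝ) (hper : Function.Periodic W 1) (heven : ∀ x : ℝ, W (-x) = W x)
    (hlip : LipschitzWith 1 W)
    (ε τ : ℝ) (hε : 0 < ε) (hτ : 0 < τ)
    (u v : ℝ) (huv : u ≤ v) (huc : c < u) (hvc : c < v)
    (u' v' : ℝ)
    (hu' : ∀ t : ℝ, h u' + ε * W (u' / ε) + 1 / (2 * τ) * (u' - u) ^ 2 ≤
      h t + ε * W (t / ε) + 1 / (2 * τ) * (t - u) ^ 2)
    (hv' : ∀ t : ℝ, T * v' + ε * W (v' / ε) + 1 / (2 * τ) * (v' - v) ^ 2 ≤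
      T * t + ε * W (t / ε) + 1 / (2 * τ) * (t - v) ^ 2)
    (hu'c : c < u') (hv'c : c < v') :
    u' ≤ v' := by
  by_contra hlt
  push_neg at hlt
  -- hlt : v' < u'
  -- Step 1: T ≤ slope h c v'
  have hslope : Filter.Tendsto (slope h c) (nhdsWithin c {c}ᶜ) (nhds T) :=
    hasDerivAt_iff_tendsto_slope.mp hT
  have hslope' : Filter.Tendsto (slope h c) (nhdsWithin c (Set.Ioi c)) (nhds T) :=
    hslope.mono_left (nhdsWithin_mono c (fun x hx => ne_of_gt hx))
  have hTle : T ≤ slope h c v' := by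
    refine le_of_tendsto hslope' ?_
    filter_upwards [self_mem_nhdsWithin,
      Ioo_mem_nhdsGT_of_mem (Set.left_mem_Ico.mpr hv'c)] with x hx1 hx2
    simpa [slope_def_field] using hconv.convexOn.secant_mono (Set.mem_univ c) (Set.mem_univ x) (Set.mem_univ v')
      (ne_of_gt hx1) (ne_of_gt hv'c) (le_of_lt hx2.2)
  -- Step 2: slope h c v' < slope h v' u'
  have hstrict : slope h c v' < slope h v' u' := by
    have := hconv.slope_strict_mono_adjacent (Set.mem_univ c) (Set.mem_univ u') hv'c hlt
    simpa [slope_def_field, div_eq_div_iff] using this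
  have hT2 : T < (h u' - h v') / (u' - v') := by
    calc T ≤ slope h c v' := hTle
    _ < slope h v' u' := hstrict
    _ = (h u' - h v') / (u' - v') := by rw [slope_def_field]
  have hdiff : T * (u' - v') < h u' - h v' := by
    have h1 : 0 < u' - v' := by linarith
    rw [lt_div_iff₀ h1] at hT2
    linarith
  -- Step 3: minimality comparisons
  have A := hu' v'
  have B := hv' u'
  have hk : 0 < 1 / (2 * τ) := by positivity
  nlinarith [sq_nonneg (u' - v'), mul_pos hk (mul_pos (sub_pos.mpr hlt) (sub_pos.mpr hlt))]
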